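/- (Performance difference bound, lower form.) For any two policies π, π' on a finite MDP and any bounded f : S → ℝ, define T_{π,f}(π') := E_{s∼d^π, a∼π, s'∼P}[ (π'(a|s)/π(a|s) − 1)·(R(s,a) + γ f(s') − f(s)) ] and ε_f^{π'} := max_s |E_{a∼π', s'∼P}[R(s,a) + γ f(s') − f(s)]|. Then J(π') − J(π) ≥ (1/(1−γ)) ( T_{π,f}(π') − 2 ε_f^{π'} D_TV(d^{π'} ∥ d^π) ). -/

import Mathlib

open Finset

/-- ℙ(s_t = s | π, ρ0, P): time-indexed state distribution of a finite MDP. -/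
noncomputable def visit {S A : Type*} [Fintype S] [Fintype A]
    (ρ0 : S → ℝ) (π : S → A → ℝ) (P : S → A → S → ℝ) : ℕ → S → ℝ
  | 0 => ρ0
  | (t + 1) => fun s' => ∑ s, ∑ a, visit ρ0 π P t s * π s a * P s a s'

/-- Discounted future state distribution d^π(s) = (1−γ) Σ_t γ^t ℙ(s_t = s | π). -/
noncomputable def dvisit {S A : Type*} [Fintype S] [Fintype A]
    (ρ0 : S → ℝ) (π : S → A → ℝ) (P : S → A → S → ℝ) (γ : ℝ) (s : S) : ℝ :=
  (1 - γ) * ∑' t : ℕ, γ ^ t * visit ρ0 π P t s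

/-- Expected discounted return J(π) = E_τ[Σ_t γ^t R(s_t,a_t)]. -/
noncomputable def Jret {S A : Type*} [Fintype S] [Fintype A]
    (ρ0 : S → ℝ) (π : S → A → ℝ) (P : S → A → S → ℝ) (R : S → A → ℝ) (γ : ℝ) : ℝ :=
  ∑' t : ℕ, γ ^ t * ∑ s, ∑ a, visit ρ0 π P t s * π s a * R s a

section helpers
variable {S A : Type*} [Fintype S] [Fintype A]
variable {ρ0 : S → ℝ} {π : S → A → ℝ} {P : S → A → S → ℝ}

lemma visit_nonneg (hρ0 : ∀ s, 0 ≤ ρ0 s) (hπ0 : ∀ s a, 0 ≤ π s a)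
    (hP0 : ∀ s a s', 0 ≤ P s a s') : ∀ t s, 0 ≤ visit ρ0 π P t s := by
  intro t
  induction t with
  | zero => exact hρ0
  | succ t ih =>
    intro s'
    exact Finset.sum_nonneg fun s _ => Finset.sum_nonneg fun a _ =>
      mul_nonneg (mul_nonneg (ih s) (hπ0 s a)) (hP0 s a s')

lemma visit_sum_one (hπ1 : ∀ s, ∑ a, π s a = 1) (hP1 : ∀ s a, ∑ s', P s a s' = 1)
    (hρ1 : ∑ s, ρ0 s = 1) : ∀ t, ∑ s, visit ρ0 π P t s = 1 := by
  intro t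
  induction t with
  | zero => exact hρ1
  | succ t ih =>
    show ∑ s', ∑ s, ∑ a, visit ρ0 π P t s * π s a * P s a s' = 1
    rw [Finset.sum_comm]
    calc ∑ s, ∑ s', ∑ a, visit ρ0 π P t s * π s a * P s a s'
        = ∑ s, ∑ a, ∑ s', visit ρ0 π P t s * π s a * P s a s' :=
          Finset.sum_congr rfl fun s _ => Finset.sum_comm
      _ = ∑ s, ∑ a, visit ρ0 π P t s * π s a := by
          simp only [← Finset.mul_sum, hP1, mul_one]
      _ = ∑ s, visit ρ0 π P t s := by
          simp only [← Finset.mul_sum, hπ1, mul_one]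
      _ = 1 := ih

lemma visit_le_one (hρ0 : ∀ s, 0 ≤ ρ0 s) (hπ0 : ∀ s a, 0 ≤ π s a)
    (hP0 : ∀ s a s', 0 ≤ P s a s') (hπ1 : ∀ s, ∑ a, π s a = 1)
    (hP1 : ∀ s a, ∑ s', P s a s' = 1) (hρ1 : ∑ s, ρ0 s = 1) (t : ℕ) (s : S) :
    visit ρ0 π P t s ≤ 1 := by
  rw [← visit_sum_one hπ1 hP1 hρ1 t]
  exact Finset.single_le_sum (fun i _ => visit_nonneg hρ0 hπ0 hP0 t i) (mem_univ s)

lemma abs_visit_sum_le (hρ0 : ∀ s, 0 ≤ ρ0 s) (hπ0 : ∀ s a, 0 ≤ π s a)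
    (hP0 : ∀ s a s', 0 ≤ P s a s') (hπ1 : ∀ s, ∑ a, π s a = 1)
    (hP1 : ∀ s a, ∑ s', P s a s' = 1) (hρ1 : ∑ s, ρ0 s = 1) (g : S → ℝ) (t : ℕ) :
    |∑ s, visit ρ0 π P t s * g s| ≤ ∑ s, |g s| := by
  calc |∑ s, visit ρ0 π P t s * g s| ≤ ∑ s, |visit ρ0 π P t s * g s| :=
        Finset.abs_sum_le_sum_abs _ _
    _ ≤ ∑ s, |g s| := by
        apply Finset.sum_le_sum
        intro s _
        rw [abs_mul, abs_of_nonneg (visit_nonneg hρ0 hπ0 hP0 t s)]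
        exact mul_le_of_le_one_left (abs_nonneg _) (visit_le_one hρ0 hπ0 hP0 hπ1 hP1 hρ1 t s)

lemma summable_geom_bdd {γ : ℝ} (hγ0 : 0 ≤ γ) (hγ1 : γ < 1) {g : ℕ → ℝ} {C : ℝ}
    (h : ∀ t, |g t| ≤ C) : Summable (fun t => γ ^ t * g t) := by
  apply Summable.of_norm_bounded (g := fun t => γ ^ t * C)
    ((summable_geometric_of_lt_one hγ0 hγ1).mul_right C)
  intro t
  rw [norm_mul, norm_pow, Real.norm_eq_abs, Real.norm_eq_abs, abs_of_nonneg hγ0]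
  exact mul_le_mul_of_nonneg_left (h t) (pow_nonneg hγ0 t)

lemma jret_eq_f {γ : ℝ} (hγ0 : 0 ≤ γ) (hγ1 : γ < 1)
    (hρ0 : ∀ s, 0 ≤ ρ0 s) (hρ1 : ∑ s, ρ0 s = 1)
    (hπ0 : ∀ s a, 0 ≤ π s a) (hπ1 : ∀ s, ∑ a, π s a = 1)
    (hP0 : ∀ s a s', 0 ≤ P s a s') (hP1 : ∀ s a, ∑ s', P s a s' = 1)
    (R : S → A → ℝ) (f : S → ℝ) :
    Jret ρ0 π P R γ = (∑ s, ρ0 s * f s)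
      + (1 / (1 - γ)) * ∑ s, dvisit ρ0 π P γ s *
          (∑ a, π s a * ∑ s', P s a s' * (R s a + γ * f s' - f s)) := by
  set ε : S → ℝ := fun s => ∑ a, π s a * ∑ s', P s a s' * (R s a + γ * f s' - f s) with hεdef
  set V : ℕ → ℝ := fun t => ∑ s, visit ρ0 π P t s * f s with hVdef
  set r : ℕ → ℝ := fun t => ∑ s, visit ρ0 π P t s * (∑ a, π s a * R s a) with hrdef
  -- ε in simplified form
  have hε : ∀ s, ε s = (∑ a, π s a * R s a)
      + γ * (∑ a, π s a * ∑ s', P s a s' * f s') - f s := by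
    intro s
    have h1 : ∀ a, ∑ s', P s a s' * (R s a + γ * f s' - f s)
        = R s a + γ * (∑ s', P s a s' * f s') - f s := by
      intro a
      calc ∑ s', P s a s' * (R s a + γ * f s' - f s)
          = ∑ s', (P s a s' * (R s a - f s) + γ * (P s a s' * f s')) := by
            apply Finset.sum_congr rfl; intro s' _; ring
        _ = (∑ s', P s a s') * (R s a - f s) + γ * ∑ s', P s a s' * f s' := by
            rw [Finset.sum_add_distrib, ← Finset.sum_mul, ← Finset.mul_sum]
        _ = R s a + γ * (∑ s', P s a s' * f s') - f s := by rw [hP1]; ring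
    calc ε s = ∑ a, π s a * (R s a + γ * (∑ s', P s a s' * f s') - f s) := by
          rw [hεdef]; exact Finset.sum_congr rfl fun a _ => by rw [h1]
      _ = ∑ a, (π s a * R s a + γ * (π s a * ∑ s', P s a s' * f s') - π s a * f s) := by
          apply Finset.sum_congr rfl; intro a _; ring
      _ = (∑ a, π s a * R s a) + γ * (∑ a, π s a * ∑ s', P s a s' * f s')
            - (∑ a, π s a) * f s := by
          rw [Finset.sum_sub_distrib, Finset.sum_add_distrib, ← Finset.mul_sum,
            ← Finset.sum_mul]
      _ = _ := by rw [hπ1]; ring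
  -- ∑_s visit t s * (chained) = V (t+1)
  have hW : ∀ t, ∑ s, visit ρ0 π P t s * ∑ a, π s a * ∑ s', P s a s' * f s' = V (t + 1) := by
    intro t
    have h1 : ∀ s, visit ρ0 π P t s * ∑ a, π s a * ∑ s', P s a s' * f s'
        = ∑ a, ∑ s', visit ρ0 π P t s * π s a * P s a s' * f s' := by
      intro s
      rw [Finset.mul_sum]
      apply Finset.sum_congr rfl; intro a _
      rw [Finset.mul_sum, Finset.mul_sum]
      apply Finset.sum_congr rfl; intro s' _; ring
    calc ∑ s, visit ρ0 π P t s * ∑ a, π s a * ∑ s', P s a s' * f s'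
        = ∑ s, ∑ a, ∑ s', visit ρ0 π P t s * π s a * P s a s' * f s' :=
          Finset.sum_congr rfl fun s _ => h1 s
      _ = ∑ s, ∑ s', ∑ a, visit ρ0 π P t s * π s a * P s a s' * f s' :=
          Finset.sum_congr rfl fun s _ => Finset.sum_comm
      _ = ∑ s', ∑ s, ∑ a, visit ρ0 π P t s * π s a * P s a s' * f s' := Finset.sum_comm
      _ = ∑ s', (∑ s, ∑ a, visit ρ0 π P t s * π s a * P s a s') * f s' := by
          apply Finset.sum_congr rfl; intro s' _
          rw [Finset.sum_mul]
          exact Finset.sum_congr rfl fun s _ => (Finset.sum_mul _ _ _).symm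
      _ = V (t + 1) := rfl
  -- step algebra
  have hstep : ∀ t, ∑ s, visit ρ0 π P t s * ε s = r t + γ * V (t + 1) - V t := by
    intro t
    calc ∑ s, visit ρ0 π P t s * ε s
        = ∑ s, (visit ρ0 π P t s * (∑ a, π s a * R s a)
            + γ * (visit ρ0 π P t s * ∑ a, π s a * ∑ s', P s a s' * f s')
            - visit ρ0 π P t s * f s) := by
          apply Finset.sum_congr rfl; intro s _; rw [hε]; ring
      _ = r t + γ * (∑ s, visit ρ0 π P t s * ∑ a, π s a * ∑ s', P s a s' * f s') - V t := by
          rw [Finset.sum_sub_distrib, Finset.sum_add_distrib, ← Finset.mul_sum]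
      _ = r t + γ * V (t + 1) - V t := by rw [hW]
  -- summabilities
  have habs := abs_visit_sum_le (ρ0 := ρ0) (π := π) (P := P) hρ0 hπ0 hP0 hπ1 hP1 hρ1
  have hsum_r : Summable (fun t => γ ^ t * r t) :=
    summable_geom_bdd hγ0 hγ1 (fun t => habs _ t)
  have hsum_V : Summable (fun t => γ ^ t * V t) :=
    summable_geom_bdd hγ0 hγ1 (fun t => habs _ t)
  have hsum_E : Summable (fun t => γ ^ t * ∑ s, visit ρ0 π P t s * ε s) :=
    summable_geom_bdd hγ0 hγ1 (fun t => habs _ t)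
  have hsum_s : ∀ s : S, Summable (fun t => γ ^ t * visit ρ0 π P t s * ε s) := by
    intro s
    have : ∀ t, |visit ρ0 π P t s * ε s| ≤ |ε s| := by
      intro t
      rw [abs_mul, abs_of_nonneg (visit_nonneg hρ0 hπ0 hP0 t s)]
      exact mul_le_of_le_one_left (abs_nonneg _) (visit_le_one hρ0 hπ0 hP0 hπ1 hP1 hρ1 t s)
    simpa [mul_assoc] using summable_geom_bdd hγ0 hγ1 this
  -- the key tsum computation
  have hkey : ∑ s, dvisit ρ0 π P γ s * ε s
      = (1 - γ) * (Jret ρ0 π P R γ - ∑ s, ρ0 s * f s) := by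
    have h1 : ∑ s, dvisit ρ0 π P γ s * ε s
        = (1 - γ) * ∑ s, ∑' t, γ ^ t * visit ρ0 π P t s * ε s := by
      rw [Finset.mul_sum]
      apply Finset.sum_congr rfl; intro s _
      rw [dvisit, mul_assoc, ← tsum_mul_right]
    have h2 : ∑ s, ∑' t, γ ^ t * visit ρ0 π P t s * ε s
        = ∑' t, γ ^ t * ∑ s, visit ρ0 π P t s * ε s := by
      rw [← Summable.tsum_finsetSum (fun s _ => hsum_s s)]
      apply tsum_congr; intro t
      rw [Finset.mul_sum]
      exact Finset.sum_congr rfl fun s _ => (mul_assoc _ _ _)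
    have hJ : Jret ρ0 π P R γ = ∑' t, γ ^ t * r t := by
      apply tsum_congr; intro t
      congr 1
      apply Finset.sum_congr rfl; intro s _
      rw [Finset.mul_sum]
      exact Finset.sum_congr rfl fun a _ => (mul_assoc _ _ _)
    set u : ℕ → ℝ := fun t => γ ^ t * V t with hudef
    have hu1 : Summable (fun t => u (t + 1)) := (summable_nat_add_iff 1).mpr hsum_V
    have htel : ∑' t, (u (t + 1) - u t) = -u 0 := by
      rw [Summable.tsum_sub hu1 hsum_V, Summable.tsum_eq_zero_add hsum_V]
      ring
    have h3 : ∑' t, γ ^ t * ∑ s, visit ρ0 π P t s * ε s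
        = (∑' t, γ ^ t * r t) + ∑' t, (u (t + 1) - u t) := by
      rw [← Summable.tsum_add hsum_r (hu1.sub hsum_V)]
      apply tsum_congr; intro t
      rw [hstep]
      simp only [hudef, pow_succ]
      ring
    have hV0 : u 0 = ∑ s, ρ0 s * f s := by
      simp only [hudef, pow_zero, one_mul, hVdef]
      rfl
    rw [h1, h2, h3, htel, hV0, ← hJ]
    ring
  have hγne : (1 : ℝ) - γ ≠ 0 := by linarith
  rw [hkey]
  field_simp
  ring

end helpers

/-- Performance difference bound, lower form:
J(π') − J(π) ≥ (1/(1−γ)) ( T_{π,f}(π') − 2 ε_f^{π'} D_TV(d^{π'}∥d^π) ). -/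
theorem performance_difference_lower_bound {S A : Type*} [Fintype S] [Fintype A] [Nonempty S]
    (ρ0 : S → ℝ) (π π' : S → A → ℝ) (P : S → A → S → ℝ) (R : S → A → ℝ)
    (γ : ℝ) (f : S → ℝ)
    (hγ0 : 0 ≤ γ) (hγ1 : γ < 1)
    (hρ0 : ∀ s, 0 ≤ ρ0 s) (hρ1 : ∑ s, ρ0 s = 1)
    (hπ0 : ∀ s a, 0 ≤ π s a) (hπ1 : ∀ s, ∑ a, π s a = 1)
    (hπ'0 : ∀ s a, 0 ≤ π' s a) (hπ'1 : ∀ s, ∑ a, π' s a = 1)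
    (hP0 : ∀ s a s', 0 ≤ P s a s') (hP1 : ∀ s a, ∑ s', P s a s' = 1)
    (hsupp : ∀ s a, 0 < π' s a → 0 < π s a) :
    Jret ρ0 π' P R γ - Jret ρ0 π P R γ
      ≥ (1 / (1 - γ)) *
        ((∑ s, dvisit ρ0 π P γ s * ∑ a, π s a * ∑ s', P s a s' *
            ((π' s a / π s a - 1) * (R s a + γ * f s' - f s)))
          - 2 * (⨆ s, |∑ a, π' s a * ∑ s', P s a s' * (R s a + γ * f s' - f s)|) *
            ((1 / 2) * ∑ s, |dvisit ρ0 π' P γ s - dvisit ρ0 π P γ s|)) := by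

  classical
  -- advantage-type quantities
  set ε' : S → ℝ := fun s => ∑ a, π' s a * ∑ s', P s a s' * (R s a + γ * f s' - f s) with hε'
  set εp : S → ℝ := fun s => ∑ a, π s a * ∑ s', P s a s' * (R s a + γ * f s' - f s) with hεp
  set E : ℝ := ⨆ s, |ε' s| with hE
  -- rewrite the T-term
  have hT : ∀ s, (∑ a, π s a * ∑ s', P s a s' *
      ((π' s a / π s a - 1) * (R s a + γ * f s' - f s))) = ε' s - εp s := by
    intro s
    rw [hε', hεp]
    simp only
    rw [← Finset.sum_sub_distrib]
    apply Finset.sum_congr rfl; intro a _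
    have hfac : ∑ s', P s a s' * ((π' s a / π s a - 1) * (R s a + γ * f s' - f s))
        = (π' s a / π s a - 1) * ∑ s', P s a s' * (R s a + γ * f s' - f s) := by
      rw [Finset.mul_sum]; apply Finset.sum_congr rfl; intro s' _; ring
    rw [hfac]
    by_cases h : π s a = 0
    · have h' : π' s a = 0 := by
        by_contra hne
        have hpos : 0 < π' s a := lt_of_le_of_ne (hπ'0 s a) (Ne.symm hne)
        have := hsupp s a hpos
        rw [h] at this
        exact lt_irrefl 0 this
      rw [h, h']; ring
    · field_simp
  -- performance identities
  have hJπ : Jret ρ0 π P R γ = (∑ s, ρ0 s * f s)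
      + (1 / (1 - γ)) * ∑ s, dvisit ρ0 π P γ s * εp s := by
    simpa only [hεp] using jret_eq_f hγ0 hγ1 hρ0 hρ1 hπ0 hπ1 hP0 hP1 R f
  have hJπ' : Jret ρ0 π' P R γ = (∑ s, ρ0 s * f s)
      + (1 / (1 - γ)) * ∑ s, dvisit ρ0 π' P γ s * ε' s := by
    simpa only [hε'] using jret_eq_f hγ0 hγ1 hρ0 hρ1 hπ'0 hπ'1 hP0 hP1 R f
  -- sup bound
  have hEs : ∀ s, |ε' s| ≤ E := by
    intro s
    rw [hE]
    exact le_ciSup (f := fun s => |ε' s|) (Set.finite_range _).bddAbove s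
  have hc : (0 : ℝ) ≤ 1 / (1 - γ) := by
    have : (0:ℝ) < 1 - γ := by linarith
    positivity
  -- pointwise bound
  have hpt : ∀ s : S, dvisit ρ0 π P γ s * ε' s
      - E * |dvisit ρ0 π' P γ s - dvisit ρ0 π P γ s| ≤ dvisit ρ0 π' P γ s * ε' s := by
    intro s
    have h1 : -((dvisit ρ0 π' P γ s - dvisit ρ0 π P γ s) * ε' s)
        ≤ |(dvisit ρ0 π' P γ s - dvisit ρ0 π P γ s) * ε' s| := neg_le_abs _
    have h2 : |(dvisit ρ0 π' P γ s - dvisit ρ0 π P γ s) * ε' s|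
        ≤ |dvisit ρ0 π' P γ s - dvisit ρ0 π P γ s| * E := by
      rw [abs_mul]
      exact mul_le_mul_of_nonneg_left (hEs s) (abs_nonneg _)
    nlinarith [h1, h2]
  -- summed bound
  have hsumpt : (∑ s, dvisit ρ0 π P γ s * ε' s)
      - E * ∑ s, |dvisit ρ0 π' P γ s - dvisit ρ0 π P γ s|
      ≤ ∑ s, dvisit ρ0 π' P γ s * ε' s := by
    rw [Finset.mul_sum, ← Finset.sum_sub_distrib]
    exact Finset.sum_le_sum fun s _ => hpt s
  -- assemble
  have hTsum : ∑ s, dvisit ρ0 π P γ s * ∑ a, π s a * ∑ s', P s a s' *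
      ((π' s a / π s a - 1) * (R s a + γ * f s' - f s))
      = (∑ s, dvisit ρ0 π P γ s * ε' s) - ∑ s, dvisit ρ0 π P γ s * εp s := by
    rw [← Finset.sum_sub_distrib]
    apply Finset.sum_congr rfl; intro s _
    rw [hT s]; ring
  rw [ge_iff_le, hJπ, hJπ', hTsum]
  have hgoal : ((∑ s, dvisit ρ0 π P γ s * ε' s) - ∑ s, dvisit ρ0 π P γ s * εp s)
      - 2 * E * ((1/2) * ∑ s, |dvisit ρ0 π' P γ s - dvisit ρ0 π P γ s|)
      ≤ (∑ s, dvisit ρ0 π' P γ s * ε' s) - ∑ s, dvisit ρ0 π P γ s * εp s := by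
    have h2E : 2 * E * ((1/2) * ∑ s, |dvisit ρ0 π' P γ s - dvisit ρ0 π P γ s|)
        = E * ∑ s, |dvisit ρ0 π' P γ s - dvisit ρ0 π P γ s| := by ring
    rw [h2E]
    linarith [hsumpt]
  calc (1 / (1 - γ)) * (((∑ s, dvisit ρ0 π P γ s * ε' s) - ∑ s, dvisit ρ0 π P γ s * εp s)
        - 2 * E * ((1/2) * ∑ s, |dvisit ρ0 π' P γ s - dvisit ρ0 π P γ s|))
      ≤ (1 / (1 - γ)) * ((∑ s, dvisit ρ0 π' P γ s * ε' s)
          - ∑ s, dvisit ρ0 π P γ s * εp s) := mul_le_mul_of_nonneg_left hgoal hc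
    _ = ((∑ s, ρ0 s * f s) + (1 / (1 - γ)) * ∑ s, dvisit ρ0 π' P γ s * ε' s)
        - ((∑ s, ρ0 s * f s) + (1 / (1 - γ)) * ∑ s, dvisit ρ0 π P γ s * εp s) := by ring
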